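/- Let P be the self-similar measure for Sⱼ(x) = r·x + ((j−1)/2)(1−r), j = 1,2,3, weights 1/3, 0 < r < 1/3. Then the conditional expectation of X given X ∈ [0, 1/2] equals (r+1)/(6−2r), and the conditional expectation of X given X ∈ [1/2, 1] equals (5−3r)/(6−2r). -/

import Mathlib

open MeasureTheory
open scoped ENNReal

/-- The similarity mappings `S_j(x) = r x + ((j-1)/2)(1-r)`, indexed by `j : Fin 3`
(so `j = 0, 1, 2` corresponds to `j = 1, 2, 3` in the paper). -/
noncomputable def Smap (r : ℝ) (j : Fin 3) (x : ℝ) : ℝ := r * x + (j : ℝ) / 2 * (1 - r)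

/-- For a word `σ = σ₁ ⋯ σ_k` over the alphabet, the composition `S_σ = S_{σ₁} ∘ ⋯ ∘ S_{σ_k}`. -/
noncomputable def Sword (r : ℝ) {k : ℕ} (σ : Fin k → Fin 3) : ℝ → ℝ :=
  fun x => (List.ofFn σ).foldr (fun j y => Smap r j y) x

/-- The cylinder interval `J_σ = S_σ([0,1])`. -/
noncomputable def cylJ (r : ℝ) {k : ℕ} (σ : Fin k → Fin 3) : Set ℝ :=
  Set.image (Sword r σ) (Set.Icc (0 : ℝ) 1)

/-- The conditional mean `E(X | X ∈ A)` of a random variable with distribution `P`. -/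
noncomputable def condMean (P : Measure ℝ) (A : Set ℝ) : ℝ :=
  (P A).toReal⁻¹ * ∫ x in A, x ∂P

lemma Smap_measurable (r : ℝ) (j : Fin 3) : Measurable (Smap r j) := by
  unfold Smap; fun_prop

lemma Smap0 (r x : ℝ) : Smap r 0 x = r * x := by simp [Smap]
lemma Smap1 (r x : ℝ) : Smap r 1 x = r * x + (1-r)/2 := by simp [Smap]; ring
lemma Smap2 (r x : ℝ) : Smap r 2 x = r * x + (1-r) := by simp [Smap]

set_option linter.unusedSectionVars false

section Main

variable {r : ℝ} {P : Measure ℝ} [IsProbabilityMeasure P]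

/-- The functional equation applied to a measurable set. -/
lemma key_meas (hP : P = (3 : ℝ≥0∞)⁻¹ •
      (P.map (Smap r 0) + P.map (Smap r 1) + P.map (Smap r 2)))
    {A : Set ℝ} (hA : MeasurableSet A) :
    P A = 3⁻¹ * (P (Smap r 0 ⁻¹' A) + P (Smap r 1 ⁻¹' A) + P (Smap r 2 ⁻¹' A)) := by
  conv_lhs => rw [hP]
  simp only [Measure.smul_apply, Measure.coe_add, Pi.add_apply,
    Measure.map_apply (Smap_measurable r _) hA, smul_eq_mul, mul_add]

lemma step_meas (hr0 : 0 < r) (hr1 : r < 1/3)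
    (hP : P = (3 : ℝ≥0∞)⁻¹ •
      (P.map (Smap r 0) + P.map (Smap r 1) + P.map (Smap r 2)))
    {M : ℝ} (hM : 0 ≤ M) :
    P (Set.Icc (-(3*M)) (1+3*M)) ≤ P (Set.Icc (-M) (1+M)) := by
  have hsub : ∀ j : Fin 3, Set.Icc (-(3*M)) (1+3*M) ⊆ Smap r j ⁻¹' Set.Icc (-M) (1+M) := by
    intro j x hx
    have hj0 : (0:ℝ) ≤ (j:ℝ) := by positivity
    have hj2 : (j:ℝ) ≤ 2 := by fin_cases j <;> norm_num
    simp only [Set.mem_preimage, Smap, Set.mem_Icc] at *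
    constructor <;> nlinarith [hx.1, hx.2]
  have h := key_meas hP (measurableSet_Icc (a := -M) (b := 1+M))
  set t := P (Set.Icc (-(3*M)) (1+3*M)) with ht
  calc t = 3⁻¹ * (t + t + t) := by
        rw [show t + t + t = 3 * t by ring, ← mul_assoc,
          ENNReal.inv_mul_cancel (by norm_num) (by norm_num), one_mul]
    _ ≤ 3⁻¹ * (P (Smap r 0 ⁻¹' Set.Icc (-M) (1+M)) + P (Smap r 1 ⁻¹' Set.Icc (-M) (1+M))
          + P (Smap r 2 ⁻¹' Set.Icc (-M) (1+M))) := by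
        gcongr <;> exact measure_mono (hsub _)
    _ = P (Set.Icc (-M) (1+M)) := h.symm

lemma full_meas (hr0 : 0 < r) (hr1 : r < 1/3)
    (hP : P = (3 : ℝ≥0∞)⁻¹ •
      (P.map (Smap r 0) + P.map (Smap r 1) + P.map (Smap r 2)))
    {M : ℝ} (hM : 0 < M) :
    P (Set.Icc (-M) (1+M)) = 1 := by
  refine le_antisymm prob_le_one ?_
  have hpow : ∀ k : ℕ, P (Set.Icc (-(3^k*M)) (1+3^k*M)) ≤ P (Set.Icc (-M) (1+M)) := by
    intro k
    induction k with
    | zero => simp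
    | succ k ih =>
        refine le_trans ?_ ih
        have : (3:ℝ)^(k+1)*M = 3*(3^k*M) := by ring
        rw [this]
        exact step_meas hr0 hr1 hP (by positivity)
  have hUnion : (⋃ n : ℕ, Set.Icc (-(n:ℝ)) (1+n)) = Set.univ := by
    ext x
    simp only [Set.mem_iUnion, Set.mem_Icc, Set.mem_univ, iff_true]
    obtain ⟨n, hn⟩ := exists_nat_gt |x|
    exact ⟨n, by cases abs_le.mp hn.le with | intro h1 h2 => constructor <;> linarith⟩
  have hdir : Directed (fun x1 x2 => x1 ⊆ x2) (fun n : ℕ => Set.Icc (-(n:ℝ)) (1+n)) := by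
    apply Monotone.directed_le
    intro a b hab
    have hab' : (a:ℝ) ≤ b := Nat.cast_le.mpr hab
    exact Set.Icc_subset_Icc (by linarith) (by linarith)
  have h1 : (1 : ℝ≥0∞) = ⨆ n : ℕ, P (Set.Icc (-(n:ℝ)) (1+n)) := by
    rw [← Directed.measure_iUnion hdir, hUnion, measure_univ]
  rw [h1]
  refine iSup_le fun n => ?_
  obtain ⟨k, hk⟩ := pow_unbounded_of_one_lt (R := ℝ) ((n:ℝ)/M) (by norm_num : (1:ℝ) < 3)
  have hnk : (n:ℝ) ≤ 3^k*M := by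
    rw [div_lt_iff₀ hM] at hk; linarith
  refine le_trans (measure_mono ?_) (hpow k)
  apply Set.Icc_subset_Icc <;> linarith

lemma compl_null (hr0 : 0 < r) (hr1 : r < 1/3)
    (hP : P = (3 : ℝ≥0∞)⁻¹ •
      (P.map (Smap r 0) + P.map (Smap r 1) + P.map (Smap r 2))) :
    P (Set.Icc (0:ℝ) 1)ᶜ = 0 := by
  have hsub : (Set.Icc (0:ℝ) 1)ᶜ ⊆ ⋃ n : ℕ, (Set.Icc (-(1/((n:ℝ)+1))) (1+1/((n:ℝ)+1)))ᶜ := by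
    intro x hx
    simp only [Set.mem_compl_iff, Set.mem_Icc, not_and_or, not_le] at hx
    simp only [Set.mem_iUnion, Set.mem_compl_iff, Set.mem_Icc, not_and_or, not_le]
    rcases hx with h | h
    · obtain ⟨n, hn⟩ := exists_nat_one_div_lt (show (0:ℝ) < -x by linarith)
      exact ⟨n, Or.inl (by linarith)⟩
    · obtain ⟨n, hn⟩ := exists_nat_one_div_lt (show (0:ℝ) < x - 1 by linarith)
      exact ⟨n, Or.inr (by linarith)⟩
  refine measure_mono_null hsub (measure_iUnion_null fun n => ?_)
  have hfull := full_meas hr0 hr1 hP (P := P) (M := 1/((n:ℝ)+1)) (by positivity)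
  rw [measure_compl measurableSet_Icc (measure_ne_top _ _), hfull, measure_univ, tsub_self]

lemma Icc01_full (hr0 : 0 < r) (hr1 : r < 1/3)
    (hP : P = (3 : ℝ≥0∞)⁻¹ •
      (P.map (Smap r 0) + P.map (Smap r 1) + P.map (Smap r 2))) :
    P (Set.Icc (0:ℝ) 1) = 1 := by
  have h := measure_compl (μ := P) (measurableSet_Icc (a := (0:ℝ)) (b := 1)) (measure_ne_top _ _)
  rw [compl_null hr0 hr1 hP, measure_univ] at h
  have hle : P (Set.Icc (0:ℝ) 1) ≤ 1 := prob_le_one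
  have := tsub_eq_zero_iff_le.mp h.symm
  exact le_antisymm hle this


lemma null_of_sub_compl (hr0 : 0 < r) (hr1 : r < 1/3)
    (hP : P = (3 : ℝ≥0∞)⁻¹ •
      (P.map (Smap r 0) + P.map (Smap r 1) + P.map (Smap r 2)))
    {s : Set ℝ} (hs : s ⊆ (Set.Icc (0:ℝ) 1)ᶜ) : P s = 0 :=
  measure_mono_null hs (compl_null hr0 hr1 hP)

lemma atom_null (hr0 : 0 < r) (hr1 : r < 1/3)
    (hP : P = (3 : ℝ≥0∞)⁻¹ •
      (P.map (Smap r 0) + P.map (Smap r 1) + P.map (Smap r 2))) :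
    P {(1/2 : ℝ)} = 0 := by
  have h := key_meas hP (A := {(1/2:ℝ)}) (measurableSet_singleton _)
  have h0 : P (Smap r 0 ⁻¹' {(1/2:ℝ)}) = 0 := by
    refine null_of_sub_compl hr0 hr1 hP fun x hx => ?_
    simp only [Set.mem_preimage, Smap0, Set.mem_singleton_iff] at hx
    simp only [Set.mem_compl_iff, Set.mem_Icc, not_and_or, not_le]
    right; nlinarith
  have h2 : P (Smap r 2 ⁻¹' {(1/2:ℝ)}) = 0 := by
    refine null_of_sub_compl hr0 hr1 hP fun x hx => ?_
    simp only [Set.mem_preimage, Smap2, Set.mem_singleton_iff] at hx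
    simp only [Set.mem_compl_iff, Set.mem_Icc, not_and_or, not_le]
    left; nlinarith
  have h1 : Smap r 1 ⁻¹' {(1/2:ℝ)} = {(1/2:ℝ)} := by
    ext x
    simp only [Set.mem_preimage, Smap1, Set.mem_singleton_iff]
    constructor
    · intro hx; nlinarith
    · intro hx; rw [hx]; ring
  rw [h0, h2, h1, zero_add, add_zero] at h
  by_contra hne
  have hlt : (3:ℝ≥0∞)⁻¹ * P {(1/2:ℝ)} < 1 * P {(1/2:ℝ)} := by
    refine ENNReal.mul_lt_mul_left hne (measure_ne_top _ _) ?_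
    norm_num
  rw [one_mul, ← h] at hlt
  exact lt_irrefl _ hlt

lemma measL (hr0 : 0 < r) (hr1 : r < 1/3)
    (hP : P = (3 : ℝ≥0∞)⁻¹ •
      (P.map (Smap r 0) + P.map (Smap r 1) + P.map (Smap r 2))) :
    P (Set.Icc (0:ℝ) (1/2)) = 1/2 := by
  have h := key_meas hP (A := Set.Icc (0:ℝ) (1/2)) measurableSet_Icc
  have h0 : P (Smap r 0 ⁻¹' Set.Icc (0:ℝ) (1/2)) = 1 := by
    refine le_antisymm prob_le_one ?_
    rw [← Icc01_full hr0 hr1 hP]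
    refine measure_mono fun x hx => ?_
    simp only [Set.mem_Icc] at hx
    simp only [Set.mem_preimage, Smap0, Set.mem_Icc]
    constructor <;> nlinarith
  have h2 : P (Smap r 2 ⁻¹' Set.Icc (0:ℝ) (1/2)) = 0 := by
    refine null_of_sub_compl hr0 hr1 hP fun x hx => ?_
    simp only [Set.mem_preimage, Smap2, Set.mem_Icc] at hx
    simp only [Set.mem_compl_iff, Set.mem_Icc, not_and_or, not_le]
    left; nlinarith [hx.2]
  have h1 : P (Smap r 1 ⁻¹' Set.Icc (0:ℝ) (1/2)) = P (Set.Icc (0:ℝ) (1/2)) := by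
    refine le_antisymm ?_ (measure_mono fun x hx => ?_)
    · calc P (Smap r 1 ⁻¹' Set.Icc (0:ℝ) (1/2))
          ≤ P (Set.Icc (0:ℝ) (1/2) ∪ (Set.Icc (0:ℝ) 1)ᶜ) := by
            refine measure_mono fun x hx => ?_
            simp only [Set.mem_preimage, Smap1, Set.mem_Icc] at hx
            by_cases hx01 : x ∈ Set.Icc (0:ℝ) 1
            · left
              simp only [Set.mem_Icc] at hx01 ⊢
              exact ⟨hx01.1, by nlinarith [hx.2]⟩
            · right; exact hx01
        _ ≤ P (Set.Icc (0:ℝ) (1/2)) + P ((Set.Icc (0:ℝ) 1)ᶜ) := measure_union_le _ _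
        _ = P (Set.Icc (0:ℝ) (1/2)) := by rw [compl_null hr0 hr1 hP, add_zero]
    · simp only [Set.mem_Icc] at hx
      simp only [Set.mem_preimage, Smap1, Set.mem_Icc]
      constructor <;> nlinarith
  rw [h0, h1, h2, add_zero] at h
  -- h : P (Icc 0 (1/2)) = 3⁻¹ * (1 + P (Icc 0 (1/2)))
  have hfin : P (Set.Icc (0:ℝ) (1/2)) ≠ ⊤ := measure_ne_top _ _
  have htr := congrArg ENNReal.toReal h
  rw [ENNReal.toReal_mul, ENNReal.toReal_add (by norm_num) hfin] at htr
  have h3 : ((3:ℝ≥0∞)⁻¹).toReal = 1/3 := by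
    rw [ENNReal.toReal_inv]; norm_num
  rw [h3] at htr
  simp only [ENNReal.toReal_one] at htr
  have hval : (P (Set.Icc (0:ℝ) (1/2))).toReal = 1/2 := by linarith
  rw [← ENNReal.ofReal_toReal hfin, hval]
  rw [ENNReal.ofReal_div_of_pos (by norm_num)]
  norm_num

lemma measR (hr0 : 0 < r) (hr1 : r < 1/3)
    (hP : P = (3 : ℝ≥0∞)⁻¹ •
      (P.map (Smap r 0) + P.map (Smap r 1) + P.map (Smap r 2))) :
    P (Set.Icc (1/2:ℝ) 1) = 1/2 := by
  have hui := measure_union_add_inter (μ := P) (t := Set.Icc (1/2:ℝ) 1)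
    (Set.Icc (0:ℝ) (1/2)) measurableSet_Icc
  rw [Set.Icc_union_Icc_eq_Icc (by norm_num) (by norm_num),
    Set.Icc_inter_Icc] at hui
  have : (Set.Icc ((0:ℝ) ⊔ (1/2)) ((1/2) ⊓ 1)) = {(1/2:ℝ)} := by
    norm_num
  rw [this, Icc01_full hr0 hr1 hP, atom_null hr0 hr1 hP, measL hr0 hr1 hP, add_zero] at hui
  -- hui : 1 = 1/2 + P (Icc (1/2) 1)
  have h2 := ENNReal.sub_eq_of_eq_add_rev (by norm_num) hui
  rw [← h2]
  norm_num


lemma integrable_id' (hr0 : 0 < r) (hr1 : r < 1/3)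
    (hP : P = (3 : ℝ≥0∞)⁻¹ •
      (P.map (Smap r 0) + P.map (Smap r 1) + P.map (Smap r 2))) :
    Integrable (fun x : ℝ => x) P := by
  refine Integrable.mono' (integrable_const 1) aestronglyMeasurable_id ?_
  rw [ae_iff]
  refine null_of_sub_compl hr0 hr1 hP fun x hx => ?_
  simp only [Set.mem_setOf_eq, Real.norm_eq_abs, not_le] at hx
  simp only [Set.mem_compl_iff, Set.mem_Icc, not_and_or, not_le]
  rcases lt_abs.mp hx with h | h
  · exact Or.inr h
  · exact Or.inl (by linarith)

lemma integrable_id_map (hr0 : 0 < r) (hr1 : r < 1/3)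
    (hP : P = (3 : ℝ≥0∞)⁻¹ •
      (P.map (Smap r 0) + P.map (Smap r 1) + P.map (Smap r 2)))
    (j : Fin 3) : Integrable (fun x : ℝ => x) (P.map (Smap r j)) := by
  rw [show (fun x : ℝ => x) = id from rfl,
    integrable_map_measure aestronglyMeasurable_id (Smap_measurable r j).aemeasurable]
  have : (id ∘ Smap r j) = Smap r j := rfl
  rw [this]
  unfold Smap
  exact ((integrable_id' hr0 hr1 hP).const_mul r).add (integrable_const _)

lemma mean_eq (hr0 : 0 < r) (hr1 : r < 1/3)
    (hP : P = (3 : ℝ≥0∞)⁻¹ •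
      (P.map (Smap r 0) + P.map (Smap r 1) + P.map (Smap r 2))) :
    ∫ x, x ∂P = 1/2 := by
  have hint := integrable_id' hr0 hr1 hP
  have hintj := integrable_id_map hr0 hr1 hP
  set I := ∫ x, x ∂P with hI
  have heq : I = ((3:ℝ≥0∞)⁻¹).toReal • (∫ x, x ∂(P.map (Smap r 0))
      + ∫ x, x ∂(P.map (Smap r 1)) + ∫ x, x ∂(P.map (Smap r 2))) := by
    conv_lhs => rw [hI, hP]
    rw [integral_smul_measure, integral_add_measure ((hintj 0).add_measure (hintj 1)) (hintj 2),
      integral_add_measure (hintj 0) (hintj 1)]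
  have hmap : ∀ j : Fin 3, ∫ x, x ∂(P.map (Smap r j)) = r * I + (j:ℝ)/2*(1-r) := by
    intro j
    rw [show (∫ x, x ∂(P.map (Smap r j))) = ∫ x, id x ∂(P.map (Smap r j)) from rfl,
      integral_map (Smap_measurable r j).aemeasurable aestronglyMeasurable_id]
    simp only [id_eq]
    unfold Smap
    rw [integral_add (hint.const_mul r) (integrable_const _), integral_const_mul,
      integral_const]
    simp [← hI]
  rw [hmap 0, hmap 1, hmap 2] at heq
  have h3 : ((3:ℝ≥0∞)⁻¹).toReal = 1/3 := by rw [ENNReal.toReal_inv]; norm_num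
  rw [h3, smul_eq_mul] at heq
  norm_num at heq
  -- heq should now be linear in I and r*I, plus factor
  have hkey : (1 - r) * (I - 1/2) = 0 := by ring_nf; ring_nf at heq; linarith
  rcases mul_eq_zero.mp hkey with h | h
  · exfalso; linarith
  · linarith


lemma setInt_L (hr0 : 0 < r) (hr1 : r < 1/3)
    (hP : P = (3 : ℝ≥0∞)⁻¹ •
      (P.map (Smap r 0) + P.map (Smap r 1) + P.map (Smap r 2))) :
    ∫ x in Set.Icc (0:ℝ) (1/2), x ∂P = (r+1)/(4*(3-r)) := by
  have hint := integrable_id' hr0 hr1 hP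
  have hintj := integrable_id_map hr0 hr1 hP
  set A := Set.Icc (0:ℝ) (1/2) with hA
  have hAm : MeasurableSet A := measurableSet_Icc
  set m := ∫ x in A, x ∂P with hm
  have heq : m = ((3:ℝ≥0∞)⁻¹).toReal • (∫ x in A, x ∂(P.map (Smap r 0))
      + ∫ x in A, x ∂(P.map (Smap r 1)) + ∫ x in A, x ∂(P.map (Smap r 2))) := by
    have e2 : ∫ x, x ∂((P.map (Smap r 0)).restrict A + (P.map (Smap r 1)).restrict A)
        = (∫ x in A, x ∂(P.map (Smap r 0))) + ∫ x in A, x ∂(P.map (Smap r 1)) :=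
      integral_add_measure (hintj 0).integrableOn (hintj 1).integrableOn
    have e1 : ∫ x, x ∂((P.map (Smap r 0)).restrict A + (P.map (Smap r 1)).restrict A
          + (P.map (Smap r 2)).restrict A)
        = (∫ x, x ∂((P.map (Smap r 0)).restrict A + (P.map (Smap r 1)).restrict A))
          + ∫ x in A, x ∂(P.map (Smap r 2)) :=
      integral_add_measure (Integrable.add_measure (hintj 0).integrableOn
        (hintj 1).integrableOn) (hintj 2).integrableOn
    conv_lhs => rw [hm, hP]
    rw [Measure.restrict_smul, integral_smul_measure, Measure.restrict_add, Measure.restrict_add,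
      e1, e2]
  have hmap : ∀ j : Fin 3, ∫ x in A, x ∂(P.map (Smap r j))
      = ∫ x in Smap r j ⁻¹' A, Smap r j x ∂P := by
    intro j
    rw [show (∫ x in A, x ∂(P.map (Smap r j))) = ∫ x in A, id x ∂(P.map (Smap r j)) from rfl,
      setIntegral_map hAm aestronglyMeasurable_id (Smap_measurable r j).aemeasurable]
    rfl
  -- j = 0
  have h0 : ∫ x in Smap r 0 ⁻¹' A, Smap r 0 x ∂P = r * (1/2) := by
    have hae : (Smap r 0 ⁻¹' A) =ᵐ[P] Set.univ := by
      rw [MeasureTheory.ae_eq_set]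
      constructor
      · simp
      · refine null_of_sub_compl hr0 hr1 hP fun x hx => ?_
        simp only [Set.mem_diff, Set.mem_univ, true_and, Set.mem_preimage, Smap0, hA,
          Set.mem_Icc, not_and_or, not_le] at hx
        simp only [Set.mem_compl_iff, Set.mem_Icc, not_and_or, not_le]
        rcases hx with h | h
        · left; nlinarith
        · right; nlinarith
    rw [setIntegral_congr_set hae, setIntegral_univ]
    simp only [Smap0]
    rw [integral_const_mul, mean_eq hr0 hr1 hP]
  -- j = 2
  have h2 : ∫ x in Smap r 2 ⁻¹' A, Smap r 2 x ∂P = 0 := by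
    have hz : P (Smap r 2 ⁻¹' A) = 0 := by
      refine null_of_sub_compl hr0 hr1 hP fun x hx => ?_
      simp only [Set.mem_preimage, Smap2, hA, Set.mem_Icc] at hx
      simp only [Set.mem_compl_iff, Set.mem_Icc, not_and_or, not_le]
      left; nlinarith [hx.2]
    rw [Measure.restrict_eq_zero.mpr hz, integral_zero_measure]
  -- j = 1
  have h1 : ∫ x in Smap r 1 ⁻¹' A, Smap r 1 x ∂P = r * m + (1-r)/2 * (1/2) := by
    have hae : (Smap r 1 ⁻¹' A) =ᵐ[P] A := by
      rw [MeasureTheory.ae_eq_set]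
      constructor
      · refine null_of_sub_compl hr0 hr1 hP fun x hx => ?_
        simp only [Set.mem_diff, Set.mem_preimage, Smap1, hA, Set.mem_Icc,
          not_and_or, not_le] at hx
        simp only [Set.mem_compl_iff, Set.mem_Icc, not_and_or, not_le]
        rcases hx.2 with h | h
        · left; nlinarith [hx.1.1]
        · right; nlinarith [hx.1.2]
      · have hsub : A ⊆ Smap r 1 ⁻¹' A := by
          intro x hx
          simp only [hA, Set.mem_Icc] at hx
          simp only [Set.mem_preimage, Smap1, hA, Set.mem_Icc]
          constructor <;> nlinarith [hx.1, hx.2]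
        have : A \ Smap r 1 ⁻¹' A = ∅ := Set.diff_eq_empty.mpr hsub
        rw [this]
        exact measure_empty
    rw [setIntegral_congr_set hae]
    simp only [Smap1]
    rw [integral_add ((hint.const_mul r).integrableOn) ((integrableOn_const_iff).mpr
        (Or.inr (measure_lt_top _ _))),
      integral_const_mul, setIntegral_const, ← hm]
    have : (P A).toReal = 1/2 := by
      rw [hA, measL hr0 hr1 hP]
      norm_num
    rw [measureReal_def, this, smul_eq_mul]
    ring
  rw [hmap 0, hmap 1, hmap 2, h0, h1, h2] at heq
  have h3 : ((3:ℝ≥0∞)⁻¹).toReal = 1/3 := by rw [ENNReal.toReal_inv]; norm_num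
  rw [h3, smul_eq_mul] at heq
  have h43 : (4:ℝ)*(3-r) ≠ 0 := by nlinarith
  rw [eq_div_iff h43]
  linear_combination 12 * heq

lemma setInt_R (hr0 : 0 < r) (hr1 : r < 1/3)
    (hP : P = (3 : ℝ≥0∞)⁻¹ •
      (P.map (Smap r 0) + P.map (Smap r 1) + P.map (Smap r 2))) :
    ∫ x in Set.Icc (1/2:ℝ) 1, x ∂P = 1/2 - (r+1)/(4*(3-r)) := by
  have hint := integrable_id' hr0 hr1 hP
  have hIoc : ∫ x in Set.Icc (1/2:ℝ) 1, x ∂P = ∫ x in Set.Ioc (1/2:ℝ) 1, x ∂P := by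
    refine setIntegral_congr_set ?_
    rw [MeasureTheory.ae_eq_set]
    constructor
    · refine measure_mono_null (fun x hx => ?_) (atom_null hr0 hr1 hP)
      simp only [Set.mem_diff, Set.mem_Icc, Set.mem_Ioc, not_and_or, not_lt, not_le] at hx
      simp only [Set.mem_singleton_iff]
      rcases hx.2 with h | h
      · linarith [hx.1.1]
      · linarith [hx.1.2]
    · have hsub : Set.Ioc (1/2:ℝ) 1 ⊆ Set.Icc (1/2:ℝ) 1 := Set.Ioc_subset_Icc_self
      have : Set.Ioc (1/2:ℝ) 1 \ Set.Icc (1/2:ℝ) 1 = ∅ := Set.diff_eq_empty.mpr hsub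
      rw [this]
      exact measure_empty
  have hfull : ∫ x in Set.Icc (0:ℝ) 1, x ∂P = 1/2 := by
    have hae : Set.Icc (0:ℝ) 1 =ᵐ[P] Set.univ := by
      rw [MeasureTheory.ae_eq_set]
      refine ⟨by simp, ?_⟩
      refine measure_mono_null (fun x hx => ?_) (compl_null hr0 hr1 hP)
      exact hx.2
    rw [setIntegral_congr_set hae, setIntegral_univ, mean_eq hr0 hr1 hP]
  have hsplit : ∫ x in Set.Icc (0:ℝ) 1, x ∂P
      = (∫ x in Set.Icc (0:ℝ) (1/2), x ∂P) + ∫ x in Set.Ioc (1/2:ℝ) 1, x ∂P := by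
    rw [← Set.Icc_union_Ioc_eq_Icc (by norm_num : (0:ℝ) ≤ 1/2) (by norm_num : (1/2:ℝ) ≤ 1)]
    refine setIntegral_union ?_ measurableSet_Ioc hint.integrableOn hint.integrableOn
    rw [Set.disjoint_left]
    intro x hx hx'
    simp only [Set.mem_Icc] at hx
    simp only [Set.mem_Ioc] at hx'
    linarith [hx.2, hx'.1]
  rw [hIoc]
  rw [hfull, setInt_L hr0 hr1 hP] at hsplit
  linarith

end Main

theorem stmt_5 (r : ℝ) (hr0 : 0 < r) (hr1 : r < 1/3)
    (P : Measure ℝ) [IsProbabilityMeasure P]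
    (hP : P = (3 : ℝ≥0∞)⁻¹ •
      (P.map (Smap r 0) + P.map (Smap r 1) + P.map (Smap r 2))) :
    condMean P (Set.Icc (0 : ℝ) (1/2)) = (r + 1) / (6 - 2*r) ∧
    condMean P (Set.Icc (1/2 : ℝ) 1) = (5 - 3*r) / (6 - 2*r) := by
  have h62 : (6:ℝ) - 2*r ≠ 0 := by nlinarith
  have h43 : (4:ℝ)*(3-r) ≠ 0 := by nlinarith
  have h3r : (3:ℝ) - r ≠ 0 := by linarith
  constructor
  · rw [condMean, measL hr0 hr1 hP, setInt_L hr0 hr1 hP]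
    rw [show ((1:ℝ≥0∞)/2).toReal = 1/2 by norm_num]
    field_simp
    ring
  · rw [condMean, measR hr0 hr1 hP, setInt_R hr0 hr1 hP]
    rw [show ((1:ℝ≥0∞)/2).toReal = 1/2 by norm_num]
    field_simp
    ring
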